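/- arXiv:1205.6019 — 2 statements merged into one kernel-verified Lean document; each statement's English description precedes it below -/
import Mathlib

section
/- Let φ be a finite Blaschke product with φ(0) = 0. Then the restriction of φ to the unit circle 𝕋 preserves normalized Lebesgue measure m: for every Borel set A ⊆ 𝕋, m(φ^{-1}(A)) = m(A). -/
open Filter Metric Set

noncomputable section

/-- `φ` is a finite Blaschke product with `N` factors. -/
def IsBlaschkeOf (N : ℕ) (φ : ℂ → ℂ) : Prop :=
  ∃ (u : ℂ) (a : Fin N → ℂ), ‖u‖ = 1 ∧ (∀ i, ‖a i‖ < 1) ∧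
    ∀ z : ℂ, φ z = u * ∏ i, (z - a i) / (1 - (starRingEnd ℂ) (a i) * z)

/-- `φ` is a nontrivial finite Blaschke product (at least two factors). -/
def NontrivialBlaschke (φ : ℂ → ℂ) : Prop := ∃ N : ℕ, 2 ≤ N ∧ IsBlaschkeOf N φ

/-- `φ` is elliptic: it has a fixed point in the open unit disk. -/
def Elliptic (φ : ℂ → ℂ) : Prop := ∃ z ∈ ball (0 : ℂ) 1, φ z = z

/-- `φ` is parabolic with (Denjoy–Wolff) fixed point `z₀ ∈ 𝕋`, `φ'(z₀) = 1`. -/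
def ParabolicAt (φ : ℂ → ℂ) (z₀ : ℂ) : Prop :=
  z₀ ∈ sphere (0 : ℂ) 1 ∧ φ z₀ = z₀ ∧ deriv φ z₀ = 1

def Parabolic (φ : ℂ → ℂ) : Prop := ∃ z₀ : ℂ, ParabolicAt φ z₀

/-- `φ` is hyperbolic with (Denjoy–Wolff) fixed point `z₀ ∈ 𝕋`, `0 < φ'(z₀) < 1`. -/
def HyperbolicAt (φ : ℂ → ℂ) (z₀ : ℂ) : Prop :=
  z₀ ∈ sphere (0 : ℂ) 1 ∧ φ z₀ = z₀ ∧ ∃ c : ℝ, 0 < c ∧ c < 1 ∧ deriv φ z₀ = (c : ℂ)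

def Hyperbolic (φ : ℂ → ℂ) : Prop := ∃ z₀ : ℂ, HyperbolicAt φ z₀

/-- The hyperbolic (pseudo-)distance on the unit disk. -/
def hypDist (z w : ℂ) : ℝ :=
  Real.log ((1 + ‖z - w‖ / ‖1 - (starRingEnd ℂ) z * w‖) /
    (1 - ‖z - w‖ / ‖1 - (starRingEnd ℂ) z * w‖))

/-- `φ` has zero hyperbolic step. -/
def ZeroHypStep (φ : ℂ → ℂ) : Prop :=
  ∃ z ∈ ball (0 : ℂ) 1,
    Tendsto (fun n : ℕ => hypDist (φ^[n] z) (φ^[n + 1] z)) atTop (nhds 0)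

/-- `φ` has positive hyperbolic step. -/
def PosHypStep (φ : ℂ → ℂ) : Prop :=
  ∀ z ∈ ball (0 : ℂ) 1,
    ¬ Tendsto (fun n : ℕ => hypDist (φ^[n] z) (φ^[n + 1] z)) atTop (nhds 0)

/-- `z` is a recurrent point of `φ` on the unit circle. -/
def RecurrentPt (φ : ℂ → ℂ) (z : ℂ) : Prop :=
  z ∈ sphere (0 : ℂ) 1 ∧ ∃ n : ℕ → ℕ, StrictMono n ∧ (∀ k, 0 < n k) ∧
    Tendsto (fun k => φ^[n k] z) atTop (nhds z)

/-- `f` belongs to the disk algebra `A(𝔻)`. -/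
def MemDiskAlgebra (f : ℂ → ℂ) : Prop :=
  ContinuousOn f (closedBall (0 : ℂ) 1) ∧ DifferentiableOn ℂ f (ball (0 : ℂ) 1)

/-- Normalized Lebesgue measure on the unit circle, viewed as a Borel measure on `ℂ`:
the pushforward of Lebesgue measure on `[0,1)` under `t ↦ exp(2πit)`. -/
def circleMeasure : MeasureTheory.Measure ℂ :=
  MeasureTheory.Measure.map (fun t : ℝ => Complex.exp (2 * Real.pi * Complex.I * (t : ℂ)))
    (MeasureTheory.volume.restrict (Set.Ico (0 : ℝ) 1))


open MeasureTheory in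
lemma volIco : MeasureTheory.volume (Set.Ico (0:ℝ) 1) = 1 := by simp

lemma exp_mem_sphere (t : ℝ) :
    Complex.exp (2 * Real.pi * Complex.I * (t:ℂ)) ∈ sphere (0:ℂ) 1 := by
  rw [mem_sphere_zero_iff_norm, Complex.norm_exp]
  have : (2 * Real.pi * Complex.I * (t:ℂ)).re = 0 := by simp [Complex.mul_re, Complex.mul_im]
  rw [this, Real.exp_zero]

open MeasureTheory in
lemma meanValue {f : ℂ → ℂ} (hf : DiffContOnCl ℂ f (ball (0:ℂ) 1)) :
    ∫ t in Set.Ico (0:ℝ) 1, f (Complex.exp (2 * Real.pi * Complex.I * (t:ℂ))) = f 0 := by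
  have h := hf.circleIntegral_sub_inv_smul (w := 0) (by simp)
  rw [circleIntegral] at h
  simp only [deriv_circleMap, sub_zero, smul_eq_mul, circleMap_zero, Complex.ofReal_one,
    one_mul] at h
  have h2 : ∀ θ : ℝ, Complex.exp (θ * Complex.I) * Complex.I *
      ((Complex.exp (θ * Complex.I))⁻¹ * f (Complex.exp (θ * Complex.I)))
      = Complex.I * f (Complex.exp (θ * Complex.I)) := by
    intro θ
    have hne : Complex.exp (θ * Complex.I) ≠ 0 := Complex.exp_ne_zero _
    field_simp
  simp only [h2] at h
  rw [intervalIntegral.integral_const_mul] at h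
  have h3 : (∫ θ in (0:ℝ)..2 * Real.pi, f (Complex.exp (θ * Complex.I)))
      = 2 * Real.pi * f 0 := by
    apply mul_left_cancel₀ Complex.I_ne_zero
    rw [h]; push_cast; ring
  have h4 : (∫ t in (0:ℝ)..1, f (Complex.exp ((2 * Real.pi * t : ℝ) * Complex.I)))
      = (2 * Real.pi)⁻¹ • ∫ θ in (0:ℝ)..2 * Real.pi, f (Complex.exp ((θ:ℝ) * Complex.I)) := by
    have := intervalIntegral.integral_comp_mul_left
      (a := (0:ℝ)) (b := 1) (fun θ : ℝ => f (Complex.exp ((θ:ℝ) * Complex.I)))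
      (c := 2 * Real.pi) (by positivity)
    simpa using this
  rw [h3] at h4
  have h5 : (∫ t in (0:ℝ)..1, f (Complex.exp ((2 * Real.pi * t : ℝ) * Complex.I))) = f 0 := by
    rw [h4]
    have h2pi : (2 * Real.pi : ℝ) ≠ 0 := by positivity
    rw [Complex.real_smul]
    have hπ : (Real.pi : ℂ) ≠ 0 := by exact_mod_cast Real.pi_ne_zero
    field_simp
    push_cast
    field_simp
  rw [← h5, intervalIntegral.integral_of_le zero_le_one,
    MeasureTheory.integral_Ioc_eq_integral_Ioo, ← MeasureTheory.integral_Ico_eq_integral_Ioo]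
  congr 1
  funext t
  congr 1
  push_cast
  ring

lemma pow_conj_of_abs_one {z : ℂ} (hz : ‖z‖ = 1) (j k : ℕ) :
    z ^ j * (starRingEnd ℂ) z ^ k =
      if k ≤ j then z ^ (j - k) else (starRingEnd ℂ) (z ^ (k - j)) := by
  have hmc : z * (starRingEnd ℂ) z = 1 := by
    rw [Complex.mul_conj]
    norm_cast
    rw [Complex.normSq_eq_norm_sq, hz]; norm_num
  have key : ∀ {m n : ℕ}, n ≤ m → z ^ m * (starRingEnd ℂ) z ^ n = z ^ (m - n) := by
    intro m n hnm
    have h1 : z ^ m = z ^ (m - n) * z ^ n := by rw [← pow_add, Nat.sub_add_cancel hnm]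
    rw [h1, mul_assoc, ← mul_pow, hmc, one_pow, mul_one]
  by_cases h : k ≤ j
  · rw [if_pos h, key h]
  · rw [if_neg h]
    push_neg at h
    have h2 : z ^ j * (starRingEnd ℂ) z ^ k
        = (starRingEnd ℂ) (z ^ k * (starRingEnd ℂ) z ^ j) := by
      rw [map_mul, map_pow, map_pow, Complex.conj_conj]; ring
    rw [h2, key h.le, map_pow]

open MeasureTheory in
lemma eval_monomial {f : ℂ → ℂ} (hf : DiffContOnCl ℂ f (ball (0:ℂ) 1)) (h0 : f 0 = 0)
    (hs : ∀ z ∈ sphere (0:ℂ) 1, ‖f z‖ = 1) (j k : ℕ) :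
    (∫ t in Set.Ico (0:ℝ) 1,
      (f (Complex.exp (2 * Real.pi * Complex.I * (t:ℂ)))) ^ j *
      (starRingEnd ℂ) (f (Complex.exp (2 * Real.pi * Complex.I * (t:ℂ)))) ^ k)
      = if j = k then 1 else 0 := by
  have habs : ∀ t : ℝ, ‖f (Complex.exp (2 * Real.pi * Complex.I * (t:ℂ)))‖ = 1 :=
    fun t => hs _ (exp_mem_sphere t)
  have hrw : ∀ t : ℝ,
      (f (Complex.exp (2 * Real.pi * Complex.I * (t:ℂ)))) ^ j *
        (starRingEnd ℂ) (f (Complex.exp (2 * Real.pi * Complex.I * (t:ℂ)))) ^ k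
      = if k ≤ j then (f (Complex.exp (2 * Real.pi * Complex.I * (t:ℂ)))) ^ (j - k)
        else (starRingEnd ℂ) ((f (Complex.exp (2 * Real.pi * Complex.I * (t:ℂ)))) ^ (k - j)) :=
    fun t => pow_conj_of_abs_one (habs t) j k
  have hpow : ∀ n : ℕ, DiffContOnCl ℂ (fun z => (f z) ^ n) (ball (0:ℂ) 1) :=
    fun n => ⟨hf.differentiableOn.pow n, hf.continuousOn.pow n⟩
  have hMV : ∀ n : ℕ, (∫ t in Set.Ico (0:ℝ) 1,
      (f (Complex.exp (2 * Real.pi * Complex.I * (t:ℂ)))) ^ n) = (f 0) ^ n := by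
    intro n
    exact meanValue (f := fun z => (f z) ^ n) (hpow n)
  simp only [hrw]
  by_cases h : k ≤ j
  · simp only [if_pos h]
    rcases eq_or_lt_of_le h with rfl | hlt
    · simp only [if_pos rfl, Nat.sub_self, pow_zero]
      simp [volIco]
    · rw [if_neg (by omega), hMV, h0, zero_pow (by omega)]
  · rw [if_neg (by omega)]
    have h' : ¬ k ≤ j := h
    push_neg at h
    simp only [if_neg h']
    calc (∫ t in Set.Ico (0:ℝ) 1,
        (starRingEnd ℂ) ((f (Complex.exp (2 * Real.pi * Complex.I * (t:ℂ)))) ^ (k - j)))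
        = (starRingEnd ℂ) (∫ t in Set.Ico (0:ℝ) 1,
            (f (Complex.exp (2 * Real.pi * Complex.I * (t:ℂ)))) ^ (k - j)) :=
          integral_conj
      _ = 0 := by rw [hMV, h0, zero_pow (by omega), map_zero]

open MeasureTheory in
lemma integral_eq_of_monomials
    (w₁ w₂ : ℝ → (sphere (0:ℂ) 1)) (h₁ : Continuous w₁) (h₂ : Continuous w₂)
    (hm : ∀ j k : ℕ,
      (∫ t in Set.Ico (0:ℝ) 1, ((w₁ t : ℂ)) ^ j * (starRingEnd ℂ) ((w₁ t : ℂ)) ^ k) =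
      ∫ t in Set.Ico (0:ℝ) 1, ((w₂ t : ℂ)) ^ j * (starRingEnd ℂ) ((w₂ t : ℂ)) ^ k)
    (g : C(sphere (0:ℂ) 1, ℂ)) :
    (∫ t in Set.Ico (0:ℝ) 1, g (w₁ t)) = ∫ t in Set.Ico (0:ℝ) 1, g (w₂ t) := by
  have hint : ∀ (w : ℝ → (sphere (0:ℂ) 1)), Continuous w → ∀ g : C(sphere (0:ℂ) 1, ℂ),
      IntegrableOn (fun t => g (w t)) (Set.Ico (0:ℝ) 1) volume := fun w hw g =>
    ((g.continuous.comp hw).integrableOn_Icc).mono_set Set.Ico_subset_Icc_self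
  have key_cont : ∀ (w : ℝ → (sphere (0:ℂ) 1)) (hw : Continuous w),
      Continuous (fun g : C(sphere (0:ℂ) 1, ℂ) => ∫ t in Set.Ico (0:ℝ) 1, g (w t)) := by
    intro w hw
    refine (LipschitzWith.of_dist_le_mul (K := 1) ?_).continuous
    intro g h
    rw [dist_eq_norm, dist_eq_norm]
    have heq : (∫ t in Set.Ico (0:ℝ) 1, g (w t)) - ∫ t in Set.Ico (0:ℝ) 1, h (w t)
        = ∫ t in Set.Ico (0:ℝ) 1, (g - h) (w t) := by
      simp only [ContinuousMap.sub_apply]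
      rw [integral_sub (hint w hw g) (hint w hw h)]
    rw [heq]
    have hb := norm_setIntegral_le_of_norm_le_const (μ := volume) (s := Set.Ico (0:ℝ) 1)
      (C := ‖g - h‖) (by rw [volIco]; exact ENNReal.one_lt_top)
      (fun x _ => ContinuousMap.norm_coe_le_norm (g - h) (w x))
    rw [Measure.real, volIco] at hb
    simpa using hb
  set K : Set C(sphere (0:ℂ) 1, ℂ) :=
    {g | (∫ t in Set.Ico (0:ℝ) 1, g (w₁ t)) = ∫ t in Set.Ico (0:ℝ) 1, g (w₂ t)} with hKdef
  show g ∈ K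
  have hKclosed : IsClosed K := isClosed_eq (key_cont w₁ h₁) (key_cont w₂ h₂)
  set X' : C(sphere (0:ℂ) 1, ℂ) := ContinuousMap.restrict (sphere (0:ℂ) 1) (ContinuousMap.id ℂ)
    with hX'
  set P : ℕ × ℕ → C(sphere (0:ℂ) 1, ℂ) := fun m => X' ^ m.1 * (star X') ^ m.2 with hP
  have hPapply : ∀ (m : ℕ × ℕ) (x : sphere (0:ℂ) 1),
      P m x = (x : ℂ) ^ m.1 * (starRingEnd ℂ) (x : ℂ) ^ m.2 := by
    intro m x
    simp [hP, hX', RCLike.star_def]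
  have hPK : ∀ m : ℕ × ℕ, P m ∈ K := by
    intro m
    simp only [hKdef, Set.mem_setOf_eq, hPapply]
    exact hm m.1 m.2
  have hspanK : ∀ p ∈ Submodule.span ℂ (Set.range P), p ∈ K := by
    intro p hp
    induction hp using Submodule.span_induction with
    | mem x hx => obtain ⟨m, rfl⟩ := hx; exact hPK m
    | zero => simp [hKdef]
    | add x y hx hy ihx ihy =>
      simp only [hKdef, Set.mem_setOf_eq, ContinuousMap.add_apply] at ihx ihy ⊢
      rw [integral_add (hint w₁ h₁ x) (hint w₁ h₁ y),
        integral_add (hint w₂ h₂ x) (hint w₂ h₂ y), ihx, ihy]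
    | smul c x hx ihx =>
      simp only [hKdef, Set.mem_setOf_eq, ContinuousMap.smul_apply, smul_eq_mul] at ihx ⊢
      rw [MeasureTheory.integral_const_mul, MeasureTheory.integral_const_mul, ihx]
  have hPmul : ∀ m n : ℕ × ℕ, P m * P n = P (m.1 + n.1, m.2 + n.2) := by
    intro m n
    simp only [hP, pow_add]
    ring
  have hspan_mul : ∀ a b, a ∈ Submodule.span ℂ (Set.range P) →
      b ∈ Submodule.span ℂ (Set.range P) → a * b ∈ Submodule.span ℂ (Set.range P) := by
    intro a b ha hb
    have h1 : a * b ∈ Submodule.span ℂ (Set.range P) * Submodule.span ℂ (Set.range P) :=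
      Submodule.mul_mem_mul ha hb
    rw [Submodule.span_mul_span] at h1
    refine Submodule.span_le.mpr ?_ h1
    rintro x hx
    rw [Set.mem_mul] at hx
    obtain ⟨y, ⟨m, rfl⟩, z, ⟨n, rfl⟩, rfl⟩ := hx
    exact Submodule.subset_span ⟨(m.1 + n.1, m.2 + n.2), (hPmul m n).symm⟩
  have hadj : ∀ p ∈ (polynomialFunctions (sphere (0:ℂ) 1)).starClosure,
      p ∈ Submodule.span ℂ (Set.range P) := by
    intro p hp
    rw [polynomialFunctions.starClosure_eq_adjoin_X] at hp
    induction hp using Algebra.adjoin_induction with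
    | mem x hx =>
      simp only [Set.mem_union, Set.mem_singleton_iff, Set.mem_star] at hx
      rw [star_eq_iff_star_eq, eq_comm (b := x)] at hx
      obtain (rfl | rfl) := hx
      · refine Submodule.subset_span ⟨(1, 0), ?_⟩
        simp only [hP, pow_one, pow_zero, mul_one]
        rw [hX', Polynomial.toContinuousMapOnAlgHom_apply,
          Polynomial.toContinuousMapOn_X_eq_restrict_id]
      · refine Submodule.subset_span ⟨(0, 1), ?_⟩
        simp only [hP, pow_one, pow_zero, one_mul]
        rw [hX', Polynomial.toContinuousMapOnAlgHom_apply,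
          Polynomial.toContinuousMapOn_X_eq_restrict_id]
    | algebraMap r =>
      rw [Algebra.algebraMap_eq_smul_one]
      refine Submodule.smul_mem _ _ (Submodule.subset_span ⟨(0, 0), ?_⟩)
      simp [hP]
    | add x y hx hy ihx ihy => exact Submodule.add_mem _ ihx ihy
    | mul x y hx hy ihx ihy => exact hspan_mul _ _ ihx ihy
  have hdense := polynomialFunctions.starClosure_topologicalClosure (sphere (0:ℂ) 1)
  have hgmem : g ∈ closure ((polynomialFunctions (sphere (0:ℂ) 1)).starClosure : Set _) := by
    have hg : g ∈ (polynomialFunctions (sphere (0:ℂ) 1)).starClosure.topologicalClosure := by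
      rw [hdense]; trivial
    exact hg
  exact closure_minimal (fun p hp => hspanK p (hadj p hp)) hKclosed hgmem

lemma blaschkeDenomNe {a z : ℂ} (ha : ‖a‖ < 1) (hz : ‖z‖ ≤ 1) :
    1 - (starRingEnd ℂ) a * z ≠ 0 := by
  intro h
  have h1 : (starRingEnd ℂ) a * z = 1 := by linear_combination -h
  have h2 : ‖(starRingEnd ℂ) a * z‖ = 1 := by rw [h1]; simp
  rw [norm_mul, Complex.norm_conj] at h2
  nlinarith [norm_nonneg z, norm_nonneg a]

/-- a finite Blaschke product fixing `0` preserves normalized Lebesgue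
measure on the unit circle. -/
theorem blaschke_measure_preserving (φ : ℂ → ℂ) (hφ : ∃ N : ℕ, 1 ≤ N ∧ IsBlaschkeOf N φ)
    (h0 : φ 0 = 0) :
    ∀ A : Set ℂ, A ⊆ sphere (0 : ℂ) 1 → MeasurableSet A →
      circleMeasure (φ ⁻¹' A) = circleMeasure A := by
  classical
  intro A hA hAm
  obtain ⟨N, hN, u, a, hu, ha, hform⟩ := hφ
  have hφfun : φ = fun z => u * ∏ i, (z - a i) / (1 - (starRingEnd ℂ) (a i) * z) := funext hform
  have hdiff : DifferentiableOn ℂ φ (closedBall (0:ℂ) 1) := by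
    rw [hφfun]
    refine DifferentiableOn.mul (differentiableOn_const u) ?_
    apply DifferentiableOn.fun_finset_prod
    intro i _
    refine DifferentiableOn.div ?_ ?_ ?_
    · exact differentiableOn_id.sub (differentiableOn_const _)
    · exact (differentiableOn_const _).sub ((differentiableOn_const _).mul differentiableOn_id)
    · intro z hz
      refine blaschkeDenomNe (ha i) ?_
      rw [mem_closedBall, dist_zero_right] at hz
      exact hz
  have hDCC : DiffContOnCl ℂ φ (ball (0:ℂ) 1) :=
    DifferentiableOn.diffContOnCl (by rwa [closure_ball (0:ℂ) one_ne_zero])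
  have hmod : ∀ z ∈ sphere (0:ℂ) 1, ‖φ z‖ = 1 := by
    intro z hz
    have hz1 : ‖z‖ = 1 := by
      rwa [mem_sphere_zero_iff_norm] at hz
    have hfac : ∀ i : Fin N,
        ‖(z - a i) / (1 - (starRingEnd ℂ) (a i) * z)‖ = 1 := by
      intro i
      have hden := blaschkeDenomNe (ha i) hz1.le
      have hz2 : z * (starRingEnd ℂ) z = 1 := by
        rw [Complex.mul_conj]
        norm_cast
        rw [Complex.normSq_eq_norm_sq, hz1]; norm_num
      have hkey : ‖1 - (starRingEnd ℂ) (a i) * z‖ = ‖z - a i‖ := by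
        have h2 : (z - a i) * (starRingEnd ℂ) z = 1 - a i * (starRingEnd ℂ) z := by
          rw [sub_mul, hz2]
        calc ‖1 - (starRingEnd ℂ) (a i) * z‖
            = ‖(starRingEnd ℂ) (1 - (starRingEnd ℂ) (a i) * z)‖ :=
              (Complex.norm_conj _).symm
          _ = ‖1 - a i * (starRingEnd ℂ) z‖ := by
              rw [map_sub, map_one, map_mul, Complex.conj_conj]
          _ = ‖(z - a i) * (starRingEnd ℂ) z‖ := by rw [h2]
          _ = ‖z - a i‖ * ‖z‖ := by rw [norm_mul, Complex.norm_conj]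
          _ = ‖z - a i‖ := by rw [hz1, mul_one]
      have hnum : ‖z - a i‖ ≠ 0 := by
        rw [← hkey]
        exact norm_ne_zero_iff.mpr hden
      rw [norm_div, hkey, div_self hnum]
    rw [hform z, norm_mul, hu, one_mul, norm_prod]
    calc (∏ i, ‖(z - a i) / (1 - (starRingEnd ℂ) (a i) * z)‖)
        = ∏ _i : Fin N, (1:ℝ) := Finset.prod_congr rfl fun i _ => hfac i
      _ = 1 := Finset.prod_const_one
  have hφmeas : Measurable φ := by
    rw [hφfun]
    apply Measurable.mul measurable_const
    apply Finset.measurable_prod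
    intro i _
    exact (measurable_id.sub measurable_const).div
      (measurable_const.sub (measurable_const.mul measurable_id))
  set e : ℝ → ℂ := fun t : ℝ => Complex.exp (2 * Real.pi * Complex.I * (t:ℂ)) with he
  have he_cont : Continuous e := by fun_prop
  have he_sphere : ∀ t, e t ∈ sphere (0:ℂ) 1 := fun t => exp_mem_sphere t
  have hΦcont : Continuous (fun t => φ (e t)) :=
    hdiff.continuousOn.comp_continuous he_cont
      (fun t => sphere_subset_closedBall (he_sphere t))
  have hsphereΦ : ∀ t, φ (e t) ∈ sphere (0:ℂ) 1 := by
    intro t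
    rw [mem_sphere_zero_iff_norm]
    exact hmod _ (he_sphere t)
  have hmapφ : circleMeasure (φ ⁻¹' A)
      = (MeasureTheory.Measure.map (fun t => φ (e t))
          (MeasureTheory.volume.restrict (Set.Ico (0:ℝ) 1))) A := by
    rw [circleMeasure, MeasureTheory.Measure.map_apply (by fun_prop) (hφmeas hAm),
      MeasureTheory.Measure.map_apply hΦcont.measurable hAm]
    rfl
  rw [hmapφ]
  have hfin : MeasureTheory.IsFiniteMeasure
      (MeasureTheory.volume.restrict (Set.Ico (0:ℝ) 1)) := by
    constructor
    rw [MeasureTheory.Measure.restrict_apply_univ, volIco]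
    exact ENNReal.one_lt_top
  have main : MeasureTheory.Measure.map (fun t => φ (e t))
      (MeasureTheory.volume.restrict (Set.Ico (0:ℝ) 1)) = circleMeasure := by
    have hfin2 : MeasureTheory.IsFiniteMeasure (MeasureTheory.Measure.map (fun t => φ (e t))
        (MeasureTheory.volume.restrict (Set.Ico (0:ℝ) 1))) :=
      MeasureTheory.Measure.isFiniteMeasure_map _ _
    have hfin3 : MeasureTheory.IsFiniteMeasure circleMeasure := by
      unfold circleMeasure
      exact MeasureTheory.Measure.isFiniteMeasure_map _ _
    apply MeasureTheory.ext_of_forall_lintegral_eq_of_IsFiniteMeasure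
    intro f
    rw [circleMeasure]
    rw [MeasureTheory.lintegral_map (f := fun x : ℂ => ((f x : ENNReal)))
        (measurable_coe_nnreal_ennreal.comp f.continuous.measurable) hΦcont.measurable,
      MeasureTheory.lintegral_map (f := fun x : ℂ => ((f x : ENNReal)))
        (measurable_coe_nnreal_ennreal.comp f.continuous.measurable) he_cont.measurable]
    have int1 : MeasureTheory.Integrable (fun t => ((f (φ (e t)) : ℝ)))
        (MeasureTheory.volume.restrict (Set.Ico (0:ℝ) 1)) :=
      (((NNReal.continuous_coe.comp (f.continuous.comp hΦcont)).integrableOn_Icc).mono_set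
        Set.Ico_subset_Icc_self)
    have int2 : MeasureTheory.Integrable (fun t => ((f (e t) : ℝ)))
        (MeasureTheory.volume.restrict (Set.Ico (0:ℝ) 1)) :=
      (((NNReal.continuous_coe.comp (f.continuous.comp he_cont)).integrableOn_Icc).mono_set
        Set.Ico_subset_Icc_self)
    rw [MeasureTheory.lintegral_coe_eq_integral _ int1,
      MeasureTheory.lintegral_coe_eq_integral _ int2]
    congr 1
    -- reduce to complex integrals
    set w₁ : ℝ → (sphere (0:ℂ) 1) := fun t => ⟨φ (e t), hsphereΦ t⟩ with hw₁def
    set w₂ : ℝ → (sphere (0:ℂ) 1) := fun t => ⟨e t, he_sphere t⟩ with hw₂def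
    have hw₁ : Continuous w₁ := Continuous.subtype_mk hΦcont _
    have hw₂ : Continuous w₂ := Continuous.subtype_mk he_cont _
    have hm : ∀ j k : ℕ,
        (∫ t in Set.Ico (0:ℝ) 1, ((w₁ t : ℂ)) ^ j * (starRingEnd ℂ) ((w₁ t : ℂ)) ^ k) =
        ∫ t in Set.Ico (0:ℝ) 1, ((w₂ t : ℂ)) ^ j * (starRingEnd ℂ) ((w₂ t : ℂ)) ^ k := by
      intro j k
      have e1 : (∫ t in Set.Ico (0:ℝ) 1,
          ((w₁ t : ℂ)) ^ j * (starRingEnd ℂ) ((w₁ t : ℂ)) ^ k) = if j = k then 1 else 0 :=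
        eval_monomial hDCC h0 hmod j k
      have e2 : (∫ t in Set.Ico (0:ℝ) 1,
          ((w₂ t : ℂ)) ^ j * (starRingEnd ℂ) ((w₂ t : ℂ)) ^ k) = if j = k then 1 else 0 :=
        eval_monomial (f := fun z => z) differentiable_id.diffContOnCl rfl
          (fun z hz => by rwa [mem_sphere_zero_iff_norm] at hz) j k
      rw [e1, e2]
    set g : C(sphere (0:ℂ) 1, ℂ) :=
      ⟨fun x => (((f (x : ℂ) : ℝ)) : ℂ), by
        exact Complex.continuous_ofReal.comp
          (NNReal.continuous_coe.comp (f.continuous.comp continuous_subtype_val))⟩ with hg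
    have hgi := integral_eq_of_monomials w₁ w₂ hw₁ hw₂ hm g
    have hgi' : (∫ t in Set.Ico (0:ℝ) 1, (((f (φ (e t)) : ℝ)) : ℂ))
        = ∫ t in Set.Ico (0:ℝ) 1, (((f (e t) : ℝ)) : ℂ) := hgi
    have intc1 : MeasureTheory.Integrable (fun t => (((f (φ (e t)) : ℝ)) : ℂ))
        (MeasureTheory.volume.restrict (Set.Ico (0:ℝ) 1)) :=
      Complex.ofRealCLM.integrable_comp int1
    have intc2 : MeasureTheory.Integrable (fun t => (((f (e t) : ℝ)) : ℂ))
        (MeasureTheory.volume.restrict (Set.Ico (0:ℝ) 1)) :=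
      Complex.ofRealCLM.integrable_comp int2
    have h1 : (∫ t in Set.Ico (0:ℝ) 1, ((f (φ (e t)) : ℝ)))
        = Complex.reCLM (∫ t in Set.Ico (0:ℝ) 1, (((f (φ (e t)) : ℝ)) : ℂ)) := by
      rw [← Complex.reCLM.integral_comp_comm intc1]
      simp
    have h2 : (∫ t in Set.Ico (0:ℝ) 1, ((f (e t) : ℝ)))
        = Complex.reCLM (∫ t in Set.Ico (0:ℝ) 1, (((f (e t) : ℝ)) : ℂ)) := by
      rw [← Complex.reCLM.integral_comp_comm intc2]
      simp
    rw [h1, h2, hgi']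
  rw [main]
end
end

section
/- Let φ be a nontrivial finite Blaschke product and let f ∈ A(𝔻) be a function which does not vanish identically on the set of recurrent points of φ on 𝕋. Then there exist an integer n ≥ 1 and a point x₀ ∈ 𝕋 with φ^n(x₀) = x₀ and f(x₀) ≠ 0; consequently there exists n ≥ 1 such that liminf_{k→∞} ( sup_{x ∈ 𝕋} ∏_{j=0}^{k−1} |f(φ^{jn}(x))| )^{1/k} > 0. -/
open Filter Metric Set

noncomputable section

def ee (t : ℝ) : ℂ := Complex.exp (2 * Real.pi * Complex.I * t)

lemma ee_add (s t : ℝ) : ee (s + t) = ee s * ee t := by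
  rw [ee, ee, ee, ← Complex.exp_add]; push_cast; ring_nf

lemma ee_ne_zero (t : ℝ) : ee t ≠ 0 := Complex.exp_ne_zero _

lemma abs_ee (t : ℝ) : ‖ee t‖ = 1 := by
  rw [ee, Complex.norm_exp]
  have : (2 * (Real.pi:ℂ) * Complex.I * (t:ℝ)).re = 0 := by simp [Complex.mul_re]
  rw [this, Real.exp_zero]

lemma ee_eq_one_iff (y : ℝ) : ee y = 1 ↔ ∃ m : ℤ, y = m := by
  rw [ee, Complex.exp_eq_one_iff]
  constructor
  · rintro ⟨n, hn⟩
    refine ⟨n, ?_⟩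
    have h2 : (2 * (Real.pi:ℂ) * Complex.I) ≠ 0 := by
      simp [Real.pi_ne_zero, Complex.I_ne_zero]
    have : (y:ℂ) = n := by
      have h3 : (y:ℂ) * (2 * Real.pi * Complex.I) = (n:ℂ) * (2 * Real.pi * Complex.I) := by
        rw [← hn]; ring
      exact mul_right_cancel₀ h2 h3
    exact_mod_cast this
  · rintro ⟨m, rfl⟩
    exact ⟨m, by push_cast; ring⟩

lemma ee_int (t : ℝ) (m : ℤ) : ee (t + m) = ee t := by
  rw [ee_add]
  have : ee (m:ℝ) = 1 := (ee_eq_one_iff _).2 ⟨m, rfl⟩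
  rw [this, mul_one]

lemma ee_eq_iff (x y : ℝ) : ee x = ee y ↔ ∃ m : ℤ, x = y + m := by
  constructor
  · intro h
    have : ee (x - y) = 1 := by
      have := ee_add (x - y) y
      rw [sub_add_cancel, h] at this
      field_simp [ee_ne_zero y] at this
      exact this.symm
    obtain ⟨m, hm⟩ := (ee_eq_one_iff _).1 this
    exact ⟨m, by linarith⟩
  · rintro ⟨m, rfl⟩; exact ee_int y m

lemma continuous_ee : Continuous ee := by
  unfold ee; fun_prop

lemma hasDerivAt_ee (t : ℝ) :
    HasDerivAt ee (2 * Real.pi * Complex.I * ee t) t := by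
  have h1 : HasDerivAt (fun w : ℂ => Complex.exp (2 * Real.pi * Complex.I * w))
      (2 * Real.pi * Complex.I * Complex.exp (2 * Real.pi * Complex.I * (t:ℂ))) (t:ℂ) := by
    have := ((hasDerivAt_id (t:ℂ)).const_mul (2 * (Real.pi:ℂ) * Complex.I)).cexp
    simpa [mul_comm] using this
  exact h1.comp_ofReal
lemma ee_periodic : Function.Periodic ee 1 := by
  intro t
  simpa using ee_int t 1

def Pker (a : ℂ) (t : ℝ) : ℝ :=
  (1 - Complex.normSq a) / Complex.normSq (1 - (starRingEnd ℂ) a * ee t)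

lemma denom_ne {a : ℂ} (ha : ‖a‖ < 1) (z : ℂ) (hz : ‖z‖ = 1) :
    1 - (starRingEnd ℂ) a * z ≠ 0 := by
  intro h
  have h1 : ‖(starRingEnd ℂ) a * z‖ = ‖a‖ := by
    rw [norm_mul, Complex.norm_conj, hz, mul_one]
  have h2 : (starRingEnd ℂ) a * z = 1 := by linear_combination -h
  rw [h2] at h1
  simp at h1
  rw [← h1] at ha
  exact lt_irrefl _ ha

lemma Pker_pos {a : ℂ} (ha : ‖a‖ < 1) (t : ℝ) : 0 < Pker a t := by
  have h1 : Complex.normSq a < 1 := by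
    have := Complex.sq_norm a
    nlinarith [norm_nonneg a]
  have h2 : 0 < Complex.normSq (1 - (starRingEnd ℂ) a * ee t) :=
    Complex.normSq_pos.2 (denom_ne ha _ (abs_ee t))
  exact div_pos (by linarith) h2

lemma Pker_cont {a : ℂ} (ha : ‖a‖ < 1) : Continuous (Pker a) := by
  apply Continuous.div continuous_const
  · exact Complex.continuous_normSq.comp (continuous_const.sub (continuous_const.mul continuous_ee))
  · intro t
    exact fun h => denom_ne ha _ (abs_ee t) (Complex.normSq_eq_zero.1 h)

lemma Pker_periodic (a : ℂ) : Function.Periodic (Pker a) 1 := by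
  intro t
  simp only [Pker, ee_periodic t]

lemma factor_hasDerivAt {a : ℂ} (ha : ‖a‖ < 1) (t : ℝ) :
    HasDerivAt (fun s => (ee s - a) / (1 - (starRingEnd ℂ) a * ee s))
      (2 * Real.pi * Complex.I * (Pker a t) *
        ((ee t - a) / (1 - (starRingEnd ℂ) a * ee t))) t := by
  have hd : 1 - (starRingEnd ℂ) a * ee t ≠ 0 := denom_ne ha _ (abs_ee t)
  have hn : HasDerivAt (fun s => ee s - a) (2 * Real.pi * Complex.I * ee t) t :=
    (hasDerivAt_ee t).sub_const a
  have hdd : HasDerivAt (fun s => 1 - (starRingEnd ℂ) a * ee s)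
      (-((starRingEnd ℂ) a * (2 * Real.pi * Complex.I * ee t))) t :=
    ((hasDerivAt_ee t).const_mul ((starRingEnd ℂ) a)).const_sub 1
  have h := hn.fun_div hdd hd
  refine h.congr_deriv ?_
  symm
  set w := ee t with hw
  set d := 1 - (starRingEnd ℂ) a * w with hdef
  have habs : Complex.normSq w = 1 := by
    rw [Complex.normSq_eq_norm_sq, abs_ee]; norm_num
  have hwa : (1 - a * (starRingEnd ℂ) w) * w = w - a := by
    have := Complex.mul_conj w
    rw [habs] at this
    push_cast at this
    linear_combination -a * this
  have hkey : w * ((Complex.normSq d : ℝ) : ℂ) = (w - a) * d := by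
    rw [Complex.normSq_eq_conj_mul_self]
    have hcd : (starRingEnd ℂ) d = 1 - a * (starRingEnd ℂ) w := by
      simp [hdef, map_mul]
    rw [hcd]
    linear_combination d * hwa
  have hnsd : ((Complex.normSq d : ℝ) : ℂ) ≠ 0 := by
    intro hcon
    exact hd (Complex.normSq_eq_zero.1 (by exact_mod_cast hcon))
  have hnum : 2 * (Real.pi:ℂ) * Complex.I * w * d -
      (w - a) * -((starRingEnd ℂ) a * (2 * Real.pi * Complex.I * w)) =
      2 * Real.pi * Complex.I * w * (1 - (Complex.normSq a : ℝ)) := by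
    have hca : ((Complex.normSq a : ℝ) : ℂ) = (starRingEnd ℂ) a * a :=
      Complex.normSq_eq_conj_mul_self
    rw [hca, hdef]; ring
  rw [hnum, Pker]
  push_cast
  field_simp
  rw [← hw, ← hdef]
  rw [div_eq_iff hnsd]
  linear_combination (-(1 - ((Complex.normSq a : ℝ) : ℂ))) * hkey
def rhoF {N : ℕ} (a : Fin N → ℂ) (t : ℝ) : ℝ := ∑ i, Pker (a i) t

def BBl {N : ℕ} (u : ℂ) (a : Fin N → ℂ) (z : ℂ) : ℂ :=
  u * ∏ i, (z - a i) / (1 - (starRingEnd ℂ) (a i) * z)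

lemma rhoF_cont {N : ℕ} {a : Fin N → ℂ} (ha : ∀ i, ‖a i‖ < 1) :
    Continuous (rhoF a) :=
  continuous_finset_sum _ (fun i _ => Pker_cont (ha i))

lemma rhoF_periodic {N : ℕ} (a : Fin N → ℂ) : Function.Periodic (rhoF a) 1 := by
  intro t; unfold rhoF; simp only [Pker_periodic _ t]

lemma rhoF_nonneg {N : ℕ} {a : Fin N → ℂ} (ha : ∀ i, ‖a i‖ < 1) (t : ℝ) :
    0 ≤ rhoF a t :=
  Finset.sum_nonneg fun i _ => (Pker_pos (ha i) t).le

lemma abs_BBl {N : ℕ} {u : ℂ} {a : Fin N → ℂ} (hu : ‖u‖ = 1)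
    (ha : ∀ i, ‖a i‖ < 1) (z : ℂ) (hz : ‖z‖ = 1) :
    ‖BBl u a z‖ = 1 := by
  unfold BBl
  rw [norm_mul, hu, one_mul, norm_prod]
  apply Finset.prod_eq_one
  intro i _
  rw [norm_div]
  have hd : ‖1 - (starRingEnd ℂ) (a i) * z‖ ≠ 0 :=
    norm_ne_zero_iff.mpr (denom_ne (ha i) z hz)
  rw [div_eq_one_iff_eq hd]
  have hns : Complex.normSq z = 1 := by rw [Complex.normSq_eq_norm_sq, hz]; norm_num
  have key : (starRingEnd ℂ) z * (z - a i) = (starRingEnd ℂ) (1 - (starRingEnd ℂ) (a i) * z) := by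
    rw [map_sub, map_mul, Complex.conj_conj, map_one]
    have := Complex.mul_conj z
    rw [hns] at this
    push_cast at this
    linear_combination this
  calc ‖z - a i‖ = ‖(starRingEnd ℂ) z * (z - a i)‖ := by
        rw [norm_mul, Complex.norm_conj, hz, one_mul]
    _ = ‖1 - (starRingEnd ℂ) (a i) * z‖ := by rw [key, Complex.norm_conj]

lemma BBl_hasDerivAt {N : ℕ} (u : ℂ) {a : Fin N → ℂ} (ha : ∀ i, ‖a i‖ < 1)
    (t : ℝ) :
    HasDerivAt (fun s => BBl u a (ee s))
      (2 * Real.pi * Complex.I * (rhoF a t) * BBl u a (ee t)) t := by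
  have hprod : HasDerivAt (fun s => ∏ i, (ee s - a i) / (1 - (starRingEnd ℂ) (a i) * ee s))
      (∑ i, (∏ j ∈ Finset.univ.erase i, (ee t - a j) / (1 - (starRingEnd ℂ) (a j) * ee t)) •
        (2 * Real.pi * Complex.I * (Pker (a i) t) *
          ((ee t - a i) / (1 - (starRingEnd ℂ) (a i) * ee t)))) t :=
    HasDerivAt.fun_finsetProd (fun i _ => factor_hasDerivAt (ha i) t)
  have heq : (∑ i, (∏ j ∈ Finset.univ.erase i, (ee t - a j) / (1 - (starRingEnd ℂ) (a j) * ee t)) •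
        (2 * Real.pi * Complex.I * (Pker (a i) t) *
          ((ee t - a i) / (1 - (starRingEnd ℂ) (a i) * ee t)))) =
      2 * Real.pi * Complex.I * (rhoF a t) *
        ∏ i, (ee t - a i) / (1 - (starRingEnd ℂ) (a i) * ee t) := by
    have : ∀ i : Fin N, (∏ j ∈ Finset.univ.erase i, (ee t - a j) / (1 - (starRingEnd ℂ) (a j) * ee t)) •
        (2 * Real.pi * Complex.I * (Pker (a i) t) *
          ((ee t - a i) / (1 - (starRingEnd ℂ) (a i) * ee t))) =
        2 * Real.pi * Complex.I * (Pker (a i) t) *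
          ∏ j, (ee t - a j) / (1 - (starRingEnd ℂ) (a j) * ee t) := by
      intro i
      rw [smul_eq_mul, ← Finset.mul_prod_erase Finset.univ _ (Finset.mem_univ i)]
      ring
    rw [Finset.sum_congr rfl (fun i _ => this i), ← Finset.sum_mul]
    congr 1
    rw [rhoF]
    push_cast
    rw [Finset.mul_sum]
  rw [heq] at hprod
  have := hprod.const_mul u
  refine this.congr_deriv ?_
  unfold BBl
  ring

theorem blaschke_core {N : ℕ} (u : ℂ) (a : Fin N → ℂ) (hu : ‖u‖ = 1)
    (ha : ∀ i, ‖a i‖ < 1) :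
    ∃ G : ℝ → ℝ, (∀ t, BBl u a (ee t) = ee (G t)) ∧ Monotone G ∧ Continuous G ∧
      (∀ t, G (t + 1) = G t + ∫ s in (0:ℝ)..(1:ℝ), rhoF a s) ∧
      ∃ Dz : ℤ, (Dz : ℝ) = ∫ s in (0:ℝ)..(1:ℝ), rhoF a s := by
  have rc : Continuous (rhoF a) := rhoF_cont ha
  set B0 : ℂ := BBl u a (ee 0) with hB0def
  have habs0 : ‖B0‖ = 1 := abs_BBl hu ha _ (abs_ee 0)
  set c₀ : ℝ := Complex.arg B0 / (2 * Real.pi) with hc0def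
  have hec0 : ee c₀ = B0 := by
    have h1 := Complex.norm_mul_exp_arg_mul_I B0
    rw [habs0] at h1
    push_cast at h1
    rw [one_mul] at h1
    rw [← h1, ee]
    congr 1
    rw [hc0def]
    have hpi : (Real.pi : ℂ) ≠ 0 := by exact_mod_cast Real.pi_ne_zero
    push_cast
    field_simp
  set G : ℝ → ℝ := fun t => c₀ + ∫ s in (0:ℝ)..t, rhoF a s with hGdef
  have hG : ∀ t, HasDerivAt G (rhoF a t) t := by
    intro t
    exact (intervalIntegral.integral_hasDerivAt_right (rc.intervalIntegrable _ _)
      (rc.stronglyMeasurableAtFilter _ _) rc.continuousAt).const_add c₀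
  -- the quotient is constant
  set q : ℝ → ℂ := fun t => BBl u a (ee t) *
      Complex.exp (-(2 * Real.pi * Complex.I) * (G t : ℝ)) with hqdef
  have hq : ∀ t, HasDerivAt q 0 t := by
    intro t
    have hB := BBl_hasDerivAt u ha t
    have hGc : HasDerivAt (fun s => ((G s : ℝ) : ℂ)) ((rhoF a t : ℝ) : ℂ) t :=
      (hG t).ofReal_comp
    have hexp : HasDerivAt (fun s => Complex.exp (-(2 * Real.pi * Complex.I) * (G s : ℝ)))
        (Complex.exp (-(2 * Real.pi * Complex.I) * (G t : ℝ)) *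
          (-(2 * Real.pi * Complex.I) * (rhoF a t : ℝ))) t := by
      exact (hGc.const_mul (-(2 * Real.pi * Complex.I))).cexp
    have := hB.mul hexp
    refine this.congr_deriv ?_
    ring
  have hconst : ∀ t, q t = q 0 := by
    intro t
    exact is_const_of_deriv_eq_zero (fun s => (hq s).differentiableAt)
      (fun s => (hq s).deriv) t 0
  have hG0 : G 0 = c₀ := by simp [hGdef]
  have hq0 : q 0 = 1 := by
    show BBl u a (ee 0) * Complex.exp (-(2 * Real.pi * Complex.I) * ((G 0 : ℝ) : ℂ)) = 1
    rw [hG0, ← hB0def, ← hec0, ee, ← Complex.exp_add, ← Complex.exp_zero]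
    congr 1
    push_cast
    ring
  have hlift : ∀ t, BBl u a (ee t) = ee (G t) := by
    intro t
    have h1 := hconst t
    rw [hq0] at h1
    simp only [hqdef] at h1
    have h2 : Complex.exp (-(2 * Real.pi * Complex.I) * (G t : ℝ)) =
        (ee (G t))⁻¹ := by
      rw [ee, ← Complex.exp_neg]
      congr 1
      ring
    rw [h2] at h1
    field_simp at h1
    rw [div_eq_one_iff_eq (ee_ne_zero _)] at h1
    exact h1
  have hmono : Monotone G := by
    intro t t' htt
    have : G t' - G t = ∫ s in t..t', rhoF a s := by
      rw [hGdef]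
      simp only
      rw [add_sub_add_left_eq_sub]
      rw [intervalIntegral.integral_interval_sub_left (rc.intervalIntegrable _ _)
        (rc.intervalIntegrable _ _)]
    have h2 : 0 ≤ ∫ s in t..t', rhoF a s :=
      intervalIntegral.integral_nonneg htt (fun x _ => rhoF_nonneg ha x)
    linarith
  have hcont : Continuous G := by
    rw [continuous_iff_continuousAt]
    exact fun t => (hG t).differentiableAt.continuousAt
  have hincr : ∀ t, G (t + 1) = G t + ∫ s in (0:ℝ)..(1:ℝ), rhoF a s := by
    intro t
    have : G (t+1) - G t = ∫ s in t..(t+1), rhoF a s := by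
      rw [hGdef]
      simp only
      rw [add_sub_add_left_eq_sub]
      rw [intervalIntegral.integral_interval_sub_left (rc.intervalIntegrable _ _)
        (rc.intervalIntegrable _ _)]
    rw [(rhoF_periodic a).intervalIntegral_add_eq t 0] at this
    simp only [zero_add] at this
    linarith
  refine ⟨G, hlift, hmono, hcont, hincr, ?_⟩
  have h1 : ee (G 1) = ee (G 0) := by
    rw [← hlift 1, ← hlift 0]
    have : ee 1 = ee 0 := by
      have := ee_periodic 0
      simpa using this
    rw [this]
  obtain ⟨m, hm⟩ := (ee_eq_iff _ _).1 h1
  refine ⟨m, ?_⟩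
  have h2 : G 1 = G 0 + ∫ s in (0:ℝ)..(1:ℝ), rhoF a s := by
    have := hincr 0
    simpa using this
  rw [h2] at hm
  linarith
theorem blaschke_lift {N : ℕ} (u : ℂ) (a : Fin N → ℂ) (hu : ‖u‖ = 1)
    (ha : ∀ i, ‖a i‖ < 1) :
    ∃ (G : ℝ → ℝ) (Dz : ℤ), (∀ t, BBl u a (ee t) = ee (G t)) ∧ Monotone G ∧
      Continuous G ∧ (∀ t, G (t + 1) = G t + (Dz : ℝ)) ∧ (N : ℝ) ≤ (Dz : ℝ) := by
  obtain ⟨G, hlift, hmono, hcont, hincr, Dz, hDz⟩ := blaschke_core u a hu ha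
  refine ⟨G, Dz, hlift, hmono, hcont, fun t => by rw [hincr t, hDz], ?_⟩
  -- the integral splits as a sum of per-factor integrals, each a positive integer
  have hsplit : (∫ s in (0:ℝ)..(1:ℝ), rhoF a s) = ∑ i, ∫ s in (0:ℝ)..(1:ℝ), Pker (a i) s := by
    simp only [rhoF]
    exact intervalIntegral.integral_finset_sum
      (fun i _ => (Pker_cont (ha i)).intervalIntegrable _ _)
  have hone : ∀ i : Fin N, (1:ℝ) ≤ ∫ s in (0:ℝ)..(1:ℝ), Pker (a i) s := by
    intro i
    obtain ⟨G', hl', hm', hc', hincr', D', hD'⟩ :=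
      blaschke_core (1:ℂ) (fun _ : Fin 1 => a i) (by simp) (fun _ => ha i)
    have hr : rhoF (fun _ : Fin 1 => a i) = Pker (a i) := by
      funext t; simp [rhoF]
    rw [hr] at hD'
    have hpos : 0 < ∫ s in (0:ℝ)..(1:ℝ), Pker (a i) s :=
      intervalIntegral.intervalIntegral_pos_of_pos
        ((Pker_cont (ha i)).intervalIntegrable _ _) (Pker_pos (ha i)) one_pos
    rw [← hD'] at hpos ⊢
    have : (1:ℤ) ≤ D' := by exact_mod_cast Int.lt_iff_add_one_le.1 (by exact_mod_cast hpos : (0:ℤ) < D')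
    exact_mod_cast this
  rw [hDz, hsplit]
  calc (N:ℝ) = ∑ _i : Fin N, (1:ℝ) := by simp
    _ ≤ _ := Finset.sum_le_sum (fun i _ => hone i)
def gper (G : ℝ → ℝ) (R : ℝ) (x : ℝ) : ℝ := G x - R * x

def hfun (G : ℝ → ℝ) (R : ℝ) (t : ℝ) : ℝ :=
  t + ∑' n : ℕ, gper G R (G^[n] t) / R ^ (n + 1)

section HF

variable {G : ℝ → ℝ} {R : ℝ}

lemma G_add_int (hGadd : ∀ t, G (t + 1) = G t + R) :
    ∀ (m : ℤ) (t : ℝ), G (t + m) = G t + R * m := by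
  intro m
  induction m using Int.induction_on with
  | zero => simp
  | succ k ih =>
    intro t
    have h1 := hGadd (t + ((k : ℤ) : ℝ))
    rw [ih] at h1
    have h2 : t + ((k : ℤ) : ℝ) + 1 = t + (((k : ℤ) + 1 : ℤ) : ℝ) := by push_cast; ring
    rw [h2] at h1
    rw [h1]
    push_cast; ring
  | pred k ih =>
    intro t
    have h1 : G ((t + (-k - 1 : ℤ) : ℝ) + 1) = G ((t + (-k-1:ℤ) : ℝ)) + R := hGadd _
    have h2 : ((t + (-k - 1 : ℤ) : ℝ) + 1) = t + (-k : ℤ) := by push_cast; ring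
    rw [h2] at h1
    rw [ih] at h1
    push_cast at h1 ⊢
    linarith

lemma gper_periodic (hGadd : ∀ t, G (t + 1) = G t + R) :
    Function.Periodic (gper G R) 1 := by
  intro t
  unfold gper
  rw [hGadd]
  ring

lemma gper_bound (hcont : Continuous G) (hGadd : ∀ t, G (t + 1) = G t + R) :
    ∃ C : ℝ, 0 ≤ C ∧ ∀ x, |gper G R x| ≤ C := by
  have hgc : Continuous (gper G R) := hcont.sub (continuous_const.mul continuous_id)
  obtain ⟨C, hC⟩ := (isCompact_Icc (a := (0:ℝ)) (b := 1)).exists_bound_of_continuousOn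
    hgc.continuousOn
  refine ⟨max C 0, le_max_right _ _, fun x => ?_⟩
  have hper : ∀ (m : ℤ) (y : ℝ), gper G R (y + m) = gper G R y := by
    intro m y
    have h3 := (gper_periodic hGadd).sub_int_mul_eq (x := y + m) m
    have h4 : y + (m:ℝ) - (m:ℝ) * 1 = y := by ring
    rw [h4] at h3
    exact h3.symm
  have hx : gper G R x = gper G R (Int.fract x) := by
    have hfr : x = Int.fract x + (⌊x⌋ : ℤ) := by
      rw [Int.fract]; ring
    conv_lhs => rw [hfr]
    exact hper ⌊x⌋ (Int.fract x)
  rw [hx]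
  have h1 : Int.fract x ∈ Icc (0:ℝ) 1 := ⟨Int.fract_nonneg x, (Int.fract_lt_one x).le⟩
  exact le_trans (hC _ h1) (le_max_left _ _)

lemma hsum_partial (hGadd : ∀ t, G (t + 1) = G t + R) (hR : 2 ≤ R) :
    ∀ (n : ℕ) (t : ℝ), G^[n] t / R ^ n =
      t + ∑ k ∈ Finset.range n, gper G R (G^[k] t) / R ^ (k + 1) := by
  have hR0 : R ≠ 0 := by linarith
  intro n t
  induction n with
  | zero => simp
  | succ n ih =>
    rw [Function.iterate_succ_apply', Finset.sum_range_succ, ← add_assoc, ← ih, gper]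
    have hRn : R ^ n ≠ 0 := pow_ne_zero _ hR0
    field_simp
    ring

lemma summable_hf (hcont : Continuous G) (hGadd : ∀ t, G (t + 1) = G t + R)
    (hR : 2 ≤ R) (t : ℝ) :
    Summable (fun n : ℕ => gper G R (G^[n] t) / R ^ (n + 1)) := by
  obtain ⟨C, hC0, hC⟩ := gper_bound hcont hGadd
  apply Summable.of_norm_bounded (g := fun n => (C / R) * (1 / R) ^ n)
  · exact (summable_geometric_of_lt_one (by positivity) (by rw [div_lt_one] <;> linarith)).mul_left _
  · intro n
    have hR0 : R ≠ 0 := by linarith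
    have hcalc : (C/R)*(1/R)^n = C / R^(n+1) := by
      rw [div_pow, one_pow, div_mul_div_comm, mul_one, ← pow_succ']
    rw [hcalc, Real.norm_eq_abs, abs_div, abs_pow, abs_of_pos (by linarith : (0:ℝ) < R)]
    gcongr
    exact hC _

lemma htend (hcont : Continuous G) (hGadd : ∀ t, G (t + 1) = G t + R)
    (hR : 2 ≤ R) (t : ℝ) :
    Tendsto (fun n => G^[n] t / R ^ n) atTop (nhds (hfun G R t)) := by
  have h1 := (summable_hf hcont hGadd hR t).hasSum.tendsto_sum_nat
  have h2 := h1.const_add t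
  convert h2 using 2 with n
  · exact hsum_partial hGadd hR n t
  · rfl

end HF

section HF2

variable {G : ℝ → ℝ} {R : ℝ}

lemma hfun_mono (hmono : Monotone G) (hcont : Continuous G)
    (hGadd : ∀ t, G (t + 1) = G t + R) (hR : 2 ≤ R) : Monotone (hfun G R) := by
  intro t t' htt
  have h1 := htend hcont hGadd hR t
  have h2 := htend hcont hGadd hR t'
  refine le_of_tendsto_of_tendsto h1 h2 ?_
  filter_upwards with n
  have h3 : G^[n] t ≤ G^[n] t' := hmono.iterate n htt
  have hRn : (0:ℝ) < R ^ n := by positivity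
  exact div_le_div_of_nonneg_right h3 hRn.le

lemma hfun_cont (hcont : Continuous G) (hGadd : ∀ t, G (t + 1) = G t + R)
    (hR : 2 ≤ R) : Continuous (hfun G R) := by
  obtain ⟨C, hC0, hC⟩ := gper_bound hcont hGadd
  have hR0 : R ≠ 0 := by linarith
  apply continuous_id.add
  apply continuous_tsum (u := fun n : ℕ => (C/R) * (1/R)^n)
  · intro n
    exact (((hcont.comp (hcont.iterate n)).sub
      (continuous_const.mul (hcont.iterate n))).div_const _)
  · exact (summable_geometric_of_lt_one (by positivity)
      (by rw [div_lt_one] <;> linarith)).mul_left _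
  · intro n x
    have hcalc : (C/R)*(1/R)^n = C / R^(n+1) := by
      rw [div_pow, one_pow, div_mul_div_comm, mul_one, ← pow_succ']
    rw [hcalc, Real.norm_eq_abs, abs_div, abs_pow, abs_of_pos (by linarith : (0:ℝ) < R)]
    gcongr
    exact hC _

lemma hfun_semi (hcont : Continuous G) (hGadd : ∀ t, G (t + 1) = G t + R)
    (hR : 2 ≤ R) (t : ℝ) : hfun G R (G t) = R * hfun G R t := by
  have hR0 : R ≠ 0 := by linarith
  have h1 : Tendsto (fun n => G^[n] (G t) / R ^ n) atTop (nhds (hfun G R (G t))) :=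
    htend hcont hGadd hR (G t)
  have h2 : Tendsto (fun n => G^[n+1] t / R ^ (n+1)) atTop (nhds (hfun G R t)) :=
    (htend hcont hGadd hR t).comp (tendsto_add_atTop_nat 1)
  have h3 : Tendsto (fun n => R * (G^[n+1] t / R ^ (n+1))) atTop
      (nhds (R * hfun G R t)) := h2.const_mul R
  have h4 : (fun n => G^[n] (G t) / R ^ n) = fun n => R * (G^[n+1] t / R ^ (n+1)) := by
    funext n
    rw [← Function.iterate_succ_apply]
    rw [pow_succ']
    field_simp
  rw [h4] at h1
  exact tendsto_nhds_unique h1 h3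

lemma hfun_semi_iter (hcont : Continuous G) (hGadd : ∀ t, G (t + 1) = G t + R)
    (hR : 2 ≤ R) (p : ℕ) (t : ℝ) : hfun G R (G^[p] t) = R ^ p * hfun G R t := by
  induction p with
  | zero => simp
  | succ p ih =>
    rw [Function.iterate_succ_apply', hfun_semi hcont hGadd hR, ih, pow_succ']
    ring

lemma G_iter_add_int (hGadd : ∀ t, G (t + 1) = G t + R) {D : ℤ} (hD : R = (D:ℝ)) :
    ∀ (n : ℕ) (m : ℤ) (t : ℝ), G^[n] (t + m) = G^[n] t + ((D ^ n * m : ℤ) : ℝ) := by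
  intro n
  induction n with
  | zero => intro m t; simp
  | succ n ih =>
    intro m t
    rw [Function.iterate_succ_apply, Function.iterate_succ_apply]
    have h1 : G (t + m) = G t + ((D * m : ℤ) : ℝ) := by
      rw [G_add_int hGadd m t, hD]; push_cast; ring
    rw [h1, ih (D * m) (G t)]
    congr 1
    push_cast
    ring

lemma hfun_add_int (hcont : Continuous G) (hGadd : ∀ t, G (t + 1) = G t + R)
    (hR : 2 ≤ R) {D : ℤ} (hD : R = (D:ℝ)) (m : ℤ) (t : ℝ) :
    hfun G R (t + m) = hfun G R t + m := by
  have h1 := htend hcont hGadd hR (t + (m:ℝ))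
  have h2 : Tendsto (fun n => G^[n] t / R ^ n + (m:ℝ) * ((D:ℝ) ^ n / R ^ n)) atTop
      (nhds (hfun G R t + m)) := by
    have : (fun n => G^[n] t / R ^ n + (m:ℝ) * ((D:ℝ) ^ n / R ^ n)) =
        (fun n => G^[n] t / R ^ n + (m:ℝ)) := by
      funext n
      rw [← hD, div_self (by positivity : (R:ℝ) ^ n ≠ 0), mul_one]
    rw [this]
    exact (htend hcont hGadd hR t).add_const _
  have h4 : (fun n => G^[n] (t + (m:ℝ)) / R ^ n) =
      (fun n => G^[n] t / R ^ n + (m:ℝ) * ((D:ℝ) ^ n / R ^ n)) := by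
    funext n
    rw [G_iter_add_int hGadd hD n m t]
    push_cast
    field_simp
  rw [h4] at h1
  exact tendsto_nhds_unique h1 h2

end HF2
lemma abs_ee_sub_one_sq (y : ℝ) :
    (‖ee y - 1‖)^2 = 2 - 2 * Real.cos (2 * Real.pi * y) := by
  have h1 : ee y = Complex.exp (((2 * Real.pi * y : ℝ) : ℂ) * Complex.I) := by
    unfold ee; congr 1; push_cast; ring
  rw [h1, Complex.exp_mul_I]
  have h2 : Complex.cos ((2 * Real.pi * y : ℝ) : ℂ) + Complex.sin ((2 * Real.pi * y : ℝ):ℂ) * Complex.I - 1 =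
      ((Real.cos (2 * Real.pi * y) - 1 : ℝ) : ℂ) + ((Real.sin (2 * Real.pi * y) : ℝ) : ℂ) * Complex.I := by
    rw [← Complex.ofReal_cos, ← Complex.ofReal_sin]
    push_cast
    ring
  rw [h2, Complex.sq_norm, Complex.normSq_add_mul_I]
  have h3 := Real.sin_sq_add_cos_sq (2 * Real.pi * y)
  nlinarith [h3]

lemma near_int {η : ℝ} (hη : 0 < η) (hη2 : η ≤ 1/4) :
    ∃ c > 0, ∀ y : ℝ, ‖ee y - 1‖ < c → ∃ m : ℤ, |y - m| < η := by
  have hcos : Real.cos (2 * Real.pi * η) < 1 := by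
    have h1 : 0 < 2 * Real.pi * η := by positivity
    have h2 : 2 * Real.pi * η ≤ Real.pi := by nlinarith [Real.pi_pos]
    have := Real.strictAntiOn_cos (left_mem_Icc.2 Real.pi_pos.le)
      ⟨h1.le, h2⟩ h1
    simpa using this
  set c := Real.sqrt (2 - 2 * Real.cos (2 * Real.pi * η)) with hc
  have hcpos : 0 < c := Real.sqrt_pos.2 (by linarith)
  refine ⟨c, hcpos, fun y hy => ?_⟩
  refine ⟨round y, ?_⟩
  by_contra hcon
  push_neg at hcon
  set w := y - (round y : ℝ) with hw
  have hw2 : |w| ≤ 1/2 := abs_sub_round y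
  have hweq : Real.cos (2 * Real.pi * y) = Real.cos (2 * Real.pi * w) := by
    have : 2 * Real.pi * y = 2 * Real.pi * w + (round y : ℤ) * (2 * Real.pi) := by
      rw [hw]; push_cast; ring
    rw [this, Real.cos_add_int_mul_two_pi]
  have hmono : Real.cos (2 * Real.pi * |w|) ≤ Real.cos (2 * Real.pi * η) := by
    have h1 : 0 < 2 * Real.pi * η := by positivity
    have h2 : 2 * Real.pi * |w| ≤ Real.pi := by nlinarith [Real.pi_pos]
    have h3 : 2 * Real.pi * η ≤ 2 * Real.pi * |w| := by
      have := Real.pi_pos; nlinarith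
    rcases eq_or_lt_of_le h3 with h4 | h4
    · rw [h4]
    · exact (Real.strictAntiOn_cos ⟨h1.le, by linarith⟩ ⟨by positivity, h2⟩ h4).le
  have hcw : Real.cos (2 * Real.pi * w) = Real.cos (2 * Real.pi * |w|) := by
    rcases abs_choice w with h | h
    · rw [h]
    · rw [h]; rw [show 2 * Real.pi * -w = -(2 * Real.pi * w) by ring, Real.cos_neg]
  have hsq := abs_ee_sub_one_sq y
  have habs : 0 ≤ ‖ee y - 1‖ := norm_nonneg _
  have h5 : (‖ee y - 1‖)^2 < c^2 := by nlinarith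
  rw [hsq, hc] at h5
  rw [Real.sq_sqrt (by linarith)] at h5
  rw [hweq, hcw] at h5
  linarith
lemma ee_surj {z : ℂ} (hz : ‖z‖ = 1) : ∃ t, ee t = z := by
  refine ⟨Complex.arg z / (2 * Real.pi), ?_⟩
  have h1 := Complex.norm_mul_exp_arg_mul_I z
  rw [hz] at h1
  push_cast at h1
  rw [one_mul] at h1
  have hpi : (Real.pi : ℂ) ≠ 0 := by exact_mod_cast Real.pi_ne_zero
  conv_rhs => rw [← h1]
  rw [ee]
  congr 1
  push_cast
  field_simp
theorem exists_periodic_nonzero (φ : ℂ → ℂ) (N : ℕ) (hN : 2 ≤ N) (u : ℂ) (a : Fin N → ℂ)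
    (hu : ‖u‖ = 1) (ha : ∀ i, ‖a i‖ < 1)
    (hφz : ∀ w : ℂ, φ w = BBl u a w) (f : ℂ → ℂ)
    (hfc : ContinuousOn f (closedBall (0:ℂ) 1))
    (z : ℂ) (hz1 : z ∈ sphere (0:ℂ) 1)
    (nseq : ℕ → ℕ) (hsm : StrictMono nseq) (hpos : ∀ k, 0 < nseq k)
    (htd : Tendsto (fun k => φ^[nseq k] z) atTop (nhds z)) (hfz : f z ≠ 0) :
    ∃ n : ℕ, 1 ≤ n ∧ ∃ x₀ ∈ sphere (0 : ℂ) 1, φ^[n] x₀ = x₀ ∧ f x₀ ≠ 0 := by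
  obtain ⟨G, Dz, hlift0, hmono, hcont, hGadd, hND⟩ := blaschke_lift u a hu ha
  set R : ℝ := (Dz : ℝ) with hRD
  have hR : 2 ≤ R := le_trans (by exact_mod_cast hN) hND
  have hlift : ∀ t, φ (ee t) = ee (G t) := fun t => by rw [hφz]; exact hlift0 t
  have hiter : ∀ (n : ℕ) (t : ℝ), φ^[n] (ee t) = ee (G^[n] t) := by
    intro n
    induction n with
    | zero => intro t; simp
    | succ n ih =>
      intro t
      rw [Function.iterate_succ_apply', ih, hlift, Function.iterate_succ_apply' G n t]
  have hzabs : ‖z‖ = 1 := by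
    rw [mem_sphere_iff_norm, sub_zero] at hz1
    exact hz1
  obtain ⟨tz, htz⟩ := ee_surj hzabs
  -- ε-neighborhood where f doesn't vanish
  have hcw : ContinuousWithinAt f (closedBall (0:ℂ) 1) z :=
    hfc z (sphere_subset_closedBall hz1)
  have hfzpos : 0 < ‖f z‖ := by
    rwa [norm_pos_iff]
  obtain ⟨ε, hε, hεimp⟩ := Metric.continuousWithinAt_iff.1 hcw (‖f z‖) hfzpos
  have hne : ∀ w ∈ closedBall (0:ℂ) 1, dist w z < ε → f w ≠ 0 := by
    intro w hw hd hfw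
    have := hεimp hw hd
    rw [hfw] at this
    rw [dist_eq_norm, zero_sub, norm_neg] at this
    exact lt_irrefl _ this
  obtain ⟨δ₀, hδ₀, hδ₀imp⟩ := Metric.continuousAt_iff.1 continuous_ee.continuousAt ε hε
  set δ : ℝ := min (δ₀ / 2) (1 / 8) with hδdef
  have hδpos : 0 < δ := lt_min (by linarith) (by norm_num)
  have hδ14 : δ ≤ 1 / 4 := le_trans (min_le_right _ _) (by norm_num)
  have hball : ∀ t : ℝ, |t - tz| ≤ δ → f (ee t) ≠ 0 := by
    intro t ht
    have h1 : dist t tz < δ₀ := by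
      rw [Real.dist_eq]
      have := min_le_left (δ₀/2) (1/8 : ℝ)
      calc |t - tz| ≤ δ := ht
        _ < δ₀ := by rw [hδdef]; have : min (δ₀/2) (1/8:ℝ) ≤ δ₀/2 := min_le_left _ _; linarith
    have h2 : dist (ee t) z < ε := by
      have := hδ₀imp h1
      rwa [htz] at this
    exact hne (ee t) (sphere_subset_closedBall (by
      rw [mem_sphere_iff_norm, sub_zero]; exact abs_ee t)) h2
  have hsphere_mem : ∀ t : ℝ, ee t ∈ sphere (0:ℂ) 1 := by
    intro t
    rw [mem_sphere_iff_norm, sub_zero]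
    exact abs_ee t
  -- the semiconjugacy
  have hhc : Continuous (hfun G R) := hfun_cont hcont hGadd hR
  have hhm : Monotone (hfun G R) := hfun_mono hmono hcont hGadd hR
  set s : ℝ := hfun G R tz with hsdef
  set α : ℝ := hfun G R (tz - δ) with hαdef
  set β : ℝ := hfun G R (tz + δ) with hβdef
  have hαβ : α ≤ β := hhm (by linarith)
  rcases eq_or_lt_of_le hαβ with hconst | hab
  · -- CASE B : hfun constant near tz; recurrence forces tz itself periodic
    have hsα : s = α := le_antisymm
      (by rw [hconst]; exact hhm (by linarith)) (hhm (by linarith))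
    have hIcc : ∀ x ∈ Icc (tz - δ) (tz + δ), hfun G R x = s := by
      intro x hx
      refine le_antisymm ?_ ?_
      · rw [hsα, hconst]; exact hhm hx.2
      · rw [hsα]; exact hhm hx.1
    -- returns near tz
    have hret : ∀ η : ℝ, 0 < η → η ≤ δ →
        ∀ᶠ k in atTop, ∃ m : ℤ, |G^[nseq k] tz - m - tz| < η := by
      intro η hη hηδ
      obtain ⟨c, hc, hcimp⟩ := near_int hη (le_trans hηδ hδ14)
      filter_upwards [Metric.tendsto_nhds.1 htd c hc] with k hk
      have hx : φ^[nseq k] z = ee (G^[nseq k] tz) := by rw [← htz, hiter]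
      rw [hx] at hk
      set xk := G^[nseq k] tz with hxk
      have hdist : dist (ee xk) z = ‖ee (xk - tz) - 1‖ := by
        rw [← htz, Complex.dist_eq]
        have h5 : ee xk - ee tz = ee tz * (ee (xk - tz) - 1) := by
          rw [mul_sub, mul_one, ← ee_add]
          congr 2
          ring
        rw [h5, norm_mul, abs_ee, one_mul]
      rw [hdist] at hk
      obtain ⟨m, hm⟩ := hcimp _ hk
      exact ⟨m, by rw [show xk - m - tz = xk - tz - m by ring]; exact hm⟩
    -- membership in S
    have hmemS : ∀ᶠ k in atTop, ∃ m : ℤ,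
        |G^[nseq k] tz - m - tz| < δ ∧ R ^ (nseq k) * s = s + m := by
      filter_upwards [hret δ hδpos le_rfl] with k hk
      obtain ⟨m, hm⟩ := hk
      refine ⟨m, hm, ?_⟩
      have hy : G^[nseq k] tz - m ∈ Icc (tz - δ) (tz + δ) := by
        rw [mem_Icc]
        constructor <;> [skip; skip] <;> cases' abs_lt.1 hm with h1 h2 <;> linarith
      have h6 : hfun G R (G^[nseq k] tz - m) = s := hIcc _ hy
      have h7 : hfun G R (G^[nseq k] tz - m) = R ^ (nseq k) * s - m := by
        rw [show G^[nseq k] tz - (m:ℝ) = G^[nseq k] tz + ((-m : ℤ) : ℝ) by push_cast; ring]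
        rw [hfun_add_int hcont hGadd hR hRD (-m) _, hfun_semi_iter hcont hGadd hR]
        push_cast
        rw [← hsdef]
        ring
      rw [h7] at h6
      linarith
    set S : Set ℕ := {n : ℕ | 1 ≤ n ∧ ∃ m : ℤ, R ^ n * s = s + m} with hSdef
    have hSne : S.Nonempty := by
      obtain ⟨k, m, _, hm2⟩ := hmemS.exists
      exact ⟨nseq k, hpos k, m, hm2⟩
    set r : ℕ := sInf S with hrdef
    obtain ⟨hr1, mr, hmr⟩ : r ∈ S := Nat.sInf_mem hSne
    have hrpos : 0 < r := hr1
    -- powers of r are in S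
    have c1 : ∀ q : ℕ, ∃ m : ℤ, R ^ (r * q) * s = s + m := by
      intro q
      induction q with
      | zero => exact ⟨0, by simp⟩
      | succ q ih =>
        obtain ⟨mq, hmq⟩ := ih
        refine ⟨mr + Dz ^ r * mq, ?_⟩
        have h8 : R ^ (r * (q+1)) * s = R ^ r * (R ^ (r * q) * s) := by
          rw [← mul_assoc, ← pow_add]
          congr 2
          ring
        rw [h8, hmq, mul_add, hmr]
        push_cast [hRD]
        ring
    have hdvd : ∀ n ∈ S, r ∣ n := by
      rintro n ⟨hn1, mn, hmn⟩
      by_contra hcon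
      have hρ : n % r ≠ 0 := fun h => hcon (Nat.dvd_of_mod_eq_zero h)
      have hρlt : n % r < r := Nat.mod_lt n hrpos
      obtain ⟨mq, hmq⟩ := c1 (n / r)
      have h9 : R ^ n * s = R ^ (n % r) * (R ^ (r * (n / r)) * s) := by
        rw [← mul_assoc, ← pow_add, Nat.mod_add_div]
      rw [hmn, hmq, mul_add] at h9
      have h10 : R ^ (n % r) * s = s + ((mn - Dz ^ (n % r) * mq : ℤ) : ℝ) := by
        push_cast [hRD] at h9 ⊢
        linarith
      have : n % r ∈ S := ⟨Nat.one_le_iff_ne_zero.2 hρ, _, h10⟩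
      exact absurd (Nat.sInf_le this) (by omega)
    -- orbit description
    set Ψ : ℝ → ℝ := fun x => G^[r] x - (mr : ℝ) with hΨdef
    have hΨmono : Monotone Ψ := fun x y h => sub_le_sub_right (hmono.iterate r h) _
    have horb : ∀ (q : ℕ) (m : ℤ), R ^ (r * q) * s = s + m → Ψ^[q] tz = G^[r * q] tz - m := by
      intro q
      induction q with
      | zero =>
        intro m hm
        have : (m : ℝ) = 0 := by
          simp only [Nat.mul_zero, pow_zero, one_mul] at hm
          linarith
        have hm0 : m = 0 := by exact_mod_cast this
        simp [hm0]
      | succ q ih =>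
        intro m hm
        obtain ⟨mq, hmq⟩ := c1 q
        have hIH := ih mq hmq
        rw [Function.iterate_succ_apply', hIH]
        have h11 : Ψ (G^[r * q] tz - mq) = G^[r * (q + 1)] tz - (mr + Dz ^ r * mq) := by
          simp only [hΨdef]
          rw [show G^[r*q] tz - (mq:ℝ) = G^[r*q] tz + ((-mq : ℤ):ℝ) by push_cast; ring]
          rw [G_iter_add_int hGadd hRD r (-mq) _]
          rw [← Function.iterate_add_apply]
          have : r + r * q = r * (q + 1) := by ring
          rw [this]
          push_cast
          ring
        rw [h11]
        have h12 : R ^ (r * (q+1)) * s = s + ((mr + Dz ^ r * mq : ℤ) : ℝ) := by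
          have h8 : R ^ (r * (q+1)) * s = R ^ r * (R ^ (r * q) * s) := by
            rw [← mul_assoc, ← pow_add]
            congr 2
            ring
          rw [h8, hmq, mul_add, hmr]
          push_cast [hRD]
          ring
        have : (m : ℝ) = ((mr + Dz ^ r * mq : ℤ) : ℝ) := by
          rw [hm] at h12
          linarith
        have hmeq : m = mr + Dz ^ r * mq := by exact_mod_cast this
        rw [hmeq]
        push_cast
        ring
    -- returns are orbit points
    have hretw : ∀ η : ℝ, 0 < η → η ≤ δ → ∃ q : ℕ, 1 ≤ q ∧ |Ψ^[q] tz - tz| < η := by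
      intro η hη hηδ
      have hev := (hret η hη hηδ).and hmemS
      obtain ⟨k, ⟨m, hm⟩, ⟨m', hm'1, hm'2⟩⟩ := hev.exists
      -- m = m' since both within 1/2
      have hmm' : m = m' := by
        have h1 : |(m:ℝ) - m'| < 1 := by
          have := abs_sub_abs_le_abs_sub (G^[nseq k] tz - m - tz) (G^[nseq k] tz - m' - tz)
          have h2 : |(G^[nseq k] tz - m - tz) - (G^[nseq k] tz - m' - tz)| ≤
              |G^[nseq k] tz - m - tz| + |G^[nseq k] tz - m' - tz| := abs_sub _ _
          have h3 : (G^[nseq k] tz - m - tz) - (G^[nseq k] tz - m' - tz) = (m' : ℝ) - m := by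
            ring
          rw [h3] at h2
          rw [abs_sub_comm]
          calc |(m':ℝ) - m| ≤ _ + _ := h2
            _ < η + δ := by exact add_lt_add hm hm'1
            _ ≤ 1 := by rw [hδdef] at *; have := min_le_right (δ₀/2) (1/8:ℝ); linarith
        have : ((m - m' : ℤ) : ℝ) = (m:ℝ) - m' := by push_cast; ring
        rw [← this] at h1
        have h4 : |m - m'| < 1 := by exact_mod_cast h1
        have h5 : m - m' = 0 := Int.abs_lt_one_iff.mp h4
        omega
      rw [hmm'] at hm
      have hSn : nseq k ∈ S := ⟨hpos k, m', hm'2⟩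
      obtain ⟨q, hq⟩ := hdvd _ hSn
      have hq1 : 1 ≤ q := by
        rcases Nat.eq_zero_or_pos q with h | h
        · rw [h, Nat.mul_zero] at hq; exact absurd (hpos k) (by omega)
        · exact h
      have horbq := horb q m' (by rw [hq] at hm'2; exact hm'2)
      rw [hq] at hm
      rw [← horbq] at hm
      exact ⟨q, hq1, hm⟩
    -- tz is a fixed point of Ψ
    have hfix : Ψ tz = tz := by
      rcases lt_trichotomy (Ψ tz) tz with hlt | heq | hgt
      · exfalso
        have hanti : ∀ q, Ψ^[q + 1] tz ≤ Ψ^[q] tz := by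
          intro q
          rw [Function.iterate_succ_apply]
          exact (hΨmono.iterate q) hlt.le
        have hmono1 : ∀ q, 1 ≤ q → Ψ^[q] tz ≤ Ψ tz := by
          intro q hq
          induction q with
          | zero => omega
          | succ q ih =>
            rcases Nat.eq_zero_or_pos q with h | h
            · rw [h]; exact le_of_eq rfl
            · exact le_trans (hanti q) (ih h)
        set η := min δ (tz - Ψ tz) with hηdef
        have hηpos : 0 < η := lt_min hδpos (by linarith)
        obtain ⟨q, hq1, hq2⟩ := hretw η hηpos (min_le_left _ _)
        have h13 : Ψ^[q] tz ≤ Ψ tz := hmono1 q hq1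
        have h14 : tz - η < Ψ^[q] tz := by cases' abs_lt.1 hq2 with h _; linarith
        have h15 : η ≤ tz - Ψ tz := min_le_right _ _
        linarith
      · exact heq
      · exfalso
        have hmon : ∀ q, Ψ^[q] tz ≤ Ψ^[q + 1] tz := by
          intro q
          rw [Function.iterate_succ_apply]
          exact (hΨmono.iterate q) hgt.le
        have hmono1 : ∀ q, 1 ≤ q → Ψ tz ≤ Ψ^[q] tz := by
          intro q hq
          induction q with
          | zero => omega
          | succ q ih =>
            rcases Nat.eq_zero_or_pos q with h | h
            · rw [h]; exact le_of_eq rfl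
            · exact le_trans (ih h) (hmon q)
        set η := min δ (Ψ tz - tz) with hηdef
        have hηpos : 0 < η := lt_min hδpos (by linarith)
        obtain ⟨q, hq1, hq2⟩ := hretw η hηpos (min_le_left _ _)
        have h13 : Ψ tz ≤ Ψ^[q] tz := hmono1 q hq1
        have h14 : Ψ^[q] tz < tz + η := by cases' abs_lt.1 hq2 with _ h; linarith
        have h15 : η ≤ Ψ tz - tz := min_le_right _ _
        linarith
    refine ⟨r, hr1, z, hz1, ?_, hfz⟩
    have : G^[r] tz = tz + mr := by
      have := hfix
      simp only [hΨdef] at this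
      linarith
    rw [← htz, hiter, this, ee_int]
  · -- CASE A : hfun non-constant near tz; find a nearby periodic point by IVT
    have hR1 : (1:ℝ) < R := by linarith
    obtain ⟨p₀, hp₀⟩ := pow_unbounded_of_one_lt (1 / (β - α) + 1) hR1
    set p := p₀ + 1 with hpdef
    have hp1 : 1 ≤ p := Nat.le_add_left _ _
    have hpp : 1 / (β - α) + 1 < R ^ p := by
      calc 1 / (β - α) + 1 < R ^ p₀ := hp₀
        _ ≤ R ^ p := pow_le_pow_right₀ (by linarith) (by omega)
    set M : ℝ := R ^ p - 1 with hMdef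
    have hβα : 0 < β - α := by linarith
    have hM1 : 1 / (β - α) < M := by rw [hMdef]; linarith
    have hMpos : 0 < M := lt_trans (by positivity) hM1
    set j : ℤ := ⌊α * M⌋ + 1 with hjdef
    set s' : ℝ := j / M with hs'def
    have hjl : α < s' := by
      rw [hs'def, lt_div_iff₀ hMpos, hjdef]
      have := Int.lt_floor_add_one (α * M)
      push_cast
      linarith
    have hjr : s' < β := by
      rw [hs'def, div_lt_iff₀ hMpos]
      have h1 : (j:ℝ) ≤ α * M + 1 := by
        rw [hjdef]
        push_cast
        have := Int.floor_le (α * M)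
        linarith
      have h2 : 1 < (β - α) * M := by
        rw [div_lt_iff₀ hβα] at hM1
        linarith [hM1]
      nlinarith
    obtain ⟨t₁, ht₁mem, ht₁⟩ := intermediate_value_Icc (by linarith : tz - δ ≤ tz + δ)
      hhc.continuousOn ⟨hjl.le, hjr.le⟩
    set K : Set ℝ := hfun G R ⁻¹' {s'} with hKdef
    have ht₁K : t₁ ∈ K := ht₁
    have hKsub : K ⊆ Icc (tz - δ) (tz + δ) := by
      intro x hx
      have hxv : hfun G R x = s' := hx
      constructor
      · by_contra h
        push_neg at h
        have : hfun G R x ≤ α := hhm h.le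
        linarith [hjl]
      · by_contra h
        push_neg at h
        have : β ≤ hfun G R x := hhm h.le
        linarith [hjr]
    have hKcl : IsClosed K := isClosed_singleton.preimage hhc
    have hKbb : BddBelow K := ⟨tz - δ, fun x hx => (hKsub hx).1⟩
    have hKba : BddAbove K := ⟨tz + δ, fun x hx => (hKsub hx).2⟩
    have hKne : K.Nonempty := ⟨t₁, ht₁K⟩
    set A : ℝ := sInf K with hAdef
    set B' : ℝ := sSup K with hBdef
    have hAK : A ∈ K := hKcl.csInf_mem hKne hKbb
    have hBK : B' ∈ K := hKcl.csSup_mem hKne hKba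
    have hAB : A ≤ B' := csInf_le_csSup hKne hKbb hKba
    have hs'fix : R ^ p * s' - j = s' := by
      have hM0 : M ≠ 0 := ne_of_gt hMpos
      rw [hs'def]
      field_simp
      rw [hMdef]
      ring
    have hFK : ∀ x ∈ K, G^[p] x - (j:ℝ) ∈ K := by
      intro x hx
      have hxv : hfun G R x = s' := hx
      have : hfun G R (G^[p] x - j) = s' := by
        rw [show G^[p] x - (j:ℝ) = G^[p] x + ((-j : ℤ):ℝ) by push_cast; ring]
        rw [hfun_add_int hcont hGadd hR hRD (-j) _, hfun_semi_iter hcont hGadd hR, hxv]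
        push_cast
        linarith [hs'fix]
      exact this
    have hFA : A ≤ G^[p] A - j := csInf_le hKbb (hFK A hAK)
    have hFB : G^[p] B' - j ≤ B' := le_csSup hKba (hFK B' hBK)
    set ψ : ℝ → ℝ := fun x => (G^[p] x - j) - x with hψdef
    have hψcont : Continuous ψ := ((hcont.iterate p).sub continuous_const).sub continuous_id
    have h0mem : (0:ℝ) ∈ Icc (ψ B') (ψ A) := ⟨by simp only [hψdef]; linarith,
      by simp only [hψdef]; linarith⟩
    obtain ⟨tstar, htsmem, htsfix⟩ := intermediate_value_Icc' hAB hψcont.continuousOn h0mem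
    have htsfix' : G^[p] tstar = tstar + j := by
      simp only [hψdef] at htsfix
      linarith
    have htsIcc : tstar ∈ Icc (tz - δ) (tz + δ) := by
      have h1 := (hKsub hAK).1
      have h2 := (hKsub hBK).2
      exact ⟨le_trans h1 htsmem.1, le_trans htsmem.2 h2⟩
    refine ⟨p, hp1, ee tstar, hsphere_mem tstar, ?_, ?_⟩
    · rw [hiter, htsfix', ee_int]
    · apply hball
      rw [abs_le]
      constructor <;> [skip; skip] <;> cases' htsIcc with h1 h2 <;> linarith
theorem liminf_part (φ f : ℂ → ℂ)
    (hφmaps : ∀ w ∈ sphere (0:ℂ) 1, φ w ∈ sphere (0:ℂ) 1)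
    (hf : ContinuousOn f (closedBall (0:ℂ) 1))
    (n : ℕ) (x₀ : ℂ) (hn : 1 ≤ n) (hx₀ : x₀ ∈ sphere (0:ℂ) 1)
    (hfix : φ^[n] x₀ = x₀) (hfx : f x₀ ≠ 0) :
    0 < Filter.liminf (fun k : ℕ =>
      (sSup ((fun x => ∏ j ∈ Finset.range k, ‖f (φ^[j * n] x)‖) ''
        sphere (0 : ℂ) 1)) ^ ((1 : ℝ) / k)) Filter.atTop := by
  have hitermaps : ∀ (j : ℕ), ∀ w ∈ sphere (0:ℂ) 1, φ^[j] w ∈ sphere (0:ℂ) 1 := by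
    intro j
    induction j with
    | zero => intro w hw; simpa using hw
    | succ j ih =>
      intro w hw
      rw [Function.iterate_succ_apply']
      exact hφmaps _ (ih w hw)
  obtain ⟨C, hC⟩ := (isCompact_closedBall (0:ℂ) 1).exists_bound_of_continuousOn hf
  set C' : ℝ := max C 1 with hC'def
  have hC'1 : 1 ≤ C' := le_max_right _ _
  have hC'pos : 0 < C' := by linarith
  set c : ℝ := ‖f x₀‖ with hcdef
  have hc : 0 < c := by rwa [hcdef, norm_pos_iff]
  set P : ℕ → ℂ → ℝ := fun k x => ∏ j ∈ Finset.range k, ‖f (φ^[j * n] x)‖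
    with hPdef
  have hPle : ∀ (k : ℕ), ∀ x ∈ sphere (0:ℂ) 1, P k x ≤ C' ^ k := by
    intro k x hx
    have h1 : ∀ j ∈ Finset.range k, ‖f (φ^[j * n] x)‖ ≤ C' := by
      intro j _
      have h2 : φ^[j * n] x ∈ sphere (0:ℂ) 1 := hitermaps _ x hx
      have h3 := hC _ (sphere_subset_closedBall h2)
      exact le_trans h3 (le_max_left _ _)
    calc P k x ≤ ∏ _j ∈ Finset.range k, C' :=
          Finset.prod_le_prod (fun j _ => norm_nonneg _) h1
      _ = C' ^ k := by rw [Finset.prod_const, Finset.card_range]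
  have hPx₀ : ∀ k : ℕ, P k x₀ = c ^ k := by
    intro k
    have h1 : ∀ j : ℕ, φ^[j * n] x₀ = x₀ := by
      intro j
      rw [Nat.mul_comm, Function.iterate_mul]
      exact Function.iterate_fixed hfix j
    simp only [hPdef]
    rw [Finset.prod_congr rfl (fun j _ => by rw [h1 j])]
    rw [Finset.prod_const, Finset.card_range, hcdef]
  have hbdd : ∀ k : ℕ, BddAbove (P k '' sphere (0:ℂ) 1) := by
    intro k
    exact ⟨C' ^ k, fun y ⟨x, hx, hxy⟩ => hxy ▸ hPle k x hx⟩
  have hne : ∀ k : ℕ, (P k '' sphere (0:ℂ) 1).Nonempty :=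
    fun k => ⟨P k x₀, x₀, hx₀, rfl⟩
  have hsup_ge : ∀ k : ℕ, c ^ k ≤ sSup (P k '' sphere (0:ℂ) 1) := by
    intro k
    rw [← hPx₀ k]
    exact le_csSup (hbdd k) ⟨x₀, hx₀, rfl⟩
  have hsup_le : ∀ k : ℕ, sSup (P k '' sphere (0:ℂ) 1) ≤ C' ^ k := by
    intro k
    exact csSup_le (hne k) (fun y ⟨x, hx, hxy⟩ => hxy ▸ hPle k x hx)
  set U : ℕ → ℝ := fun k => (sSup (P k '' sphere (0:ℂ) 1)) ^ ((1:ℝ)/k) with hUdef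
  have hUc : ∀ k : ℕ, 1 ≤ k → c ≤ U k := by
    intro k hk
    have hk0 : (k:ℝ) ≠ 0 := by exact_mod_cast Nat.one_le_iff_ne_zero.1 hk
    have h1 : ((c ^ k : ℝ)) ^ ((1:ℝ)/k) = c := by
      rw [← Real.rpow_natCast c k, ← Real.rpow_mul hc.le, mul_one_div,
        div_self hk0, Real.rpow_one]
    rw [hUdef, ← h1]
    exact Real.rpow_le_rpow (by positivity) (hsup_ge k) (by positivity)
  have hUC : ∀ k : ℕ, 1 ≤ k → U k ≤ C' := by
    intro k hk
    have hk0 : (k:ℝ) ≠ 0 := by exact_mod_cast Nat.one_le_iff_ne_zero.1 hk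
    have h1 : ((C' ^ k : ℝ)) ^ ((1:ℝ)/k) = C' := by
      rw [← Real.rpow_natCast C' k, ← Real.rpow_mul hC'pos.le, mul_one_div,
        div_self hk0, Real.rpow_one]
    rw [hUdef, ← h1]
    refine Real.rpow_le_rpow ?_ (hsup_le k) (by positivity)
    exact le_trans (by positivity) (hsup_ge k)
  have hcob : Filter.IsCoboundedUnder (· ≥ ·) Filter.atTop U := by
    apply Filter.IsBoundedUnder.isCoboundedUnder_ge
    apply Filter.isBoundedUnder_of_eventually_le (a := C')
    filter_upwards [Filter.eventually_ge_atTop 1] with k hk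
    exact hUC k hk
  have hliminf : c ≤ Filter.liminf U Filter.atTop := by
    apply Filter.le_liminf_of_le hcob
    filter_upwards [Filter.eventually_ge_atTop 1] with k hk
    exact hUc k hk
  calc (0:ℝ) < c := hc
    _ ≤ _ := hliminf

/-- if `f ∈ A(𝔻)` does not vanish identically on the recurrent points of a
nontrivial finite Blaschke product `φ`, then `f` is nonzero at some periodic point on `𝕋`,
and consequently for some period `n ≥ 1` the corresponding liminf is positive. -/
theorem nonvanishing_on_recurrent (φ f : ℂ → ℂ) (hφ : NontrivialBlaschke φ)
    (hf : MemDiskAlgebra f) (hnv : ∃ z : ℂ, RecurrentPt φ z ∧ f z ≠ 0) :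
    (∃ n : ℕ, 1 ≤ n ∧ ∃ x₀ ∈ sphere (0 : ℂ) 1, φ^[n] x₀ = x₀ ∧ f x₀ ≠ 0) ∧
    (∃ n : ℕ, 1 ≤ n ∧
      0 < Filter.liminf (fun k : ℕ =>
        (sSup ((fun x => ∏ j ∈ Finset.range k, ‖f (φ^[j * n] x)‖) ''
          sphere (0 : ℂ) 1)) ^ ((1 : ℝ) / k)) Filter.atTop) := by
  obtain ⟨z, ⟨hz1, nseq, hsm, hposk, htd⟩, hfz⟩ := hnv
  obtain ⟨N, hN, u, a, hu, ha, hφz⟩ := hφ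
  have hφz' : ∀ w : ℂ, φ w = BBl u a w := fun w => hφz w
  have hmain := exists_periodic_nonzero φ N hN u a hu ha hφz' f hf.1 z hz1
    nseq hsm hposk htd hfz
  refine ⟨hmain, ?_⟩
  obtain ⟨n, hn, x₀, hx₀, hfix, hfx⟩ := hmain
  have hφmaps : ∀ w ∈ sphere (0:ℂ) 1, φ w ∈ sphere (0:ℂ) 1 := by
    intro w hw
    rw [mem_sphere_iff_norm, sub_zero] at hw ⊢
    rw [hφz' w]
    exact abs_BBl hu ha w hw
  exact ⟨n, hn, liminf_part φ f hφmaps hf.1 n x₀ hn hx₀ hfix hfx⟩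
end
end
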